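/- Let P be a path in T with vertex sequence p(1),…,p(k), let u be a vertex not on P that is adjacent in T to the endpoint p(k), and let P' = P ∪ {u}. Assume 1 − λ·S̄(P') > 0. Then F(P') = F(P) + (α1 + (2·α2·β/vt)·w_{T_u}·(w(T) − w_{T_u}) − (1−β)·(α2/vt)·w_{T_u})·d(P,u) + α2·β·(Q̄(P') − Q̄(P)). -/

import Mathlib

open scoped ENNReal

noncomputable section

/-- A finite tree with positive edge lengths, nonnegative vertex weights,
and a positive cruising speed. -/
structure WeightedTree (V : Type*) [Fintype V] where
  G : SimpleGraph V
  isTree : G.IsTree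
  len : Sym2 V → ℝ
  len_pos : ∀ e ∈ G.edgeSet, 0 < len e
  w : V → ℝ
  w_nonneg : ∀ v, 0 ≤ w v
  vt : ℝ
  vt_pos : 0 < vt

namespace WeightedTree

variable {V : Type*} [Fintype V] [DecidableEq V] (T : WeightedTree V)

/-- `d x y`: the length of the unique path between `x` and `y`. -/
def d (x y : V) : ℝ :=
  (((T.isTree.existsUnique_path x y).choose).edges.map T.len).sum

/-- The closest vertex of the list `l` (the vertex sequence of a path) to `v`. -/
def closest (l : List V) (v : V) : V :=
  if h : ∃ u ∈ l, ∀ u' ∈ l, T.d u v ≤ T.d u' v then h.choose else v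

/-- `d(P,v)`: the distance from the path with vertex sequence `l` to `v`. -/
def dP (l : List V) (v : V) : ℝ := T.d (T.closest l v) v

/-- The weight of the branch of the vertex `q` with respect to the path with
vertex sequence `l`: the total weight of all vertices whose closest vertex on
the path is `q`. -/
def wBranch (l : List V) (q : V) : ℝ :=
  ∑ v ∈ Finset.univ.filter (fun v => T.closest l v = q), T.w v

/-- `w(T)`: total weight of the tree. -/
def wT : ℝ := ∑ v, T.w v

/-- `d̄_P(û,p) = ∑_j w_{T_{p(j)}} d(p(j), p)` for the path with vertex sequence `l`. -/
def dbar (l : List V) (p : V) : ℝ := (l.map (fun q => T.wBranch l q * T.d q p)).sum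

/-- `s_p(P) = (1/vt) d̄_P(û,p)` for a vertex `p` of the path. -/
def sOn (l : List V) (p : V) : ℝ := (1 / T.vt) * T.dbar l p

/-- `s_i(P) = (1/vt) d̄_P(û,p(i))`, where `p(i)` is the closest vertex of the path to `v_i`. -/
def s (l : List V) (v : V) : ℝ := T.sOn l (T.closest l v)

/-- Mean service time `S̄(P)`. -/
def Sbar (l : List V) : ℝ := ∑ v, T.w v * T.s l v

/-- Second moment `S̄²(P)` of the service time. -/
def S2bar (l : List V) : ℝ := ∑ v, T.w v * (T.s l v) ^ 2

/-- `T̄1(P) = (1/vt) ∑ w_i d(P, v_i)`. -/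
def T1 (l : List V) : ℝ := (1 / T.vt) * ∑ v, T.w v * T.dP l v

/-- `T̄2(P) = (1/vt) ∑ w_i d̄_P(û, p(i))`. -/
def T2 (l : List V) : ℝ := (1 / T.vt) * ∑ v, T.w v * T.dbar l (T.closest l v)

/-- The M/G/1 queueing delay `Q̄(P)`, valued in `[0,∞]`. -/
def Qbar (lam : ℝ) (l : List V) : ℝ≥0∞ :=
  if 0 < 1 - lam * T.Sbar l then
    ENNReal.ofReal (lam * T.S2bar l / (2 * (1 - lam * T.Sbar l)))
  else ⊤

/-- The M/G/1 queueing delay `Q̄(P)` as an extended real. -/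
def QbarE (lam : ℝ) (l : List V) : EReal :=
  if 0 < 1 - lam * T.Sbar l then
    ((lam * T.S2bar l / (2 * (1 - lam * T.Sbar l)) : ℝ) : EReal)
  else ⊤

/-- `|P|`: the total length of the path `P`. -/
def plen {a b : V} (P : T.G.Walk a b) : ℝ := (P.edges.map T.len).sum

/-- The objective `F(P) = α1·|P| + α2·(β·(Q̄(P)+T̄2(P)) + (1-β)·T̄1(P))`. -/
def F (α1 α2 β lam : ℝ) {a b : V} (P : T.G.Walk a b) : EReal :=
  ((α1 * T.plen P : ℝ) : EReal) +
    (α2 : EReal) *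
      ((β : EReal) * (T.QbarE lam P.support + ((T.T2 P.support : ℝ) : EReal)) +
        (((1 - β) * T.T1 P.support : ℝ) : EReal))

end WeightedTree

set_option linter.unusedSectionVars false

namespace WeightedTree

open SimpleGraph Walk

variable {V : Type*} [Fintype V] [DecidableEq V] (T : WeightedTree V)

/-- The unique path between two vertices. -/
def upath (x y : V) : T.G.Walk x y := (T.isTree.existsUnique_path x y).choose

lemma upath_isPath (x y : V) : (T.upath x y).IsPath :=
  (T.isTree.existsUnique_path x y).choose_spec.1

lemma upath_unique {x y : V} {W : T.G.Walk x y} (hW : W.IsPath) : W = T.upath x y :=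
  (T.isTree.existsUnique_path x y).choose_spec.2 W hW

lemma d_def (x y : V) : T.d x y = ((T.upath x y).edges.map T.len).sum := rfl

lemma d_eq_plen {x y : V} (W : T.G.Walk x y) (hW : W.IsPath) :
    T.d x y = (W.edges.map T.len).sum := by
  rw [d_def, ← T.upath_unique hW]

lemma plen_nonneg {x y : V} (W : T.G.Walk x y) : 0 ≤ (W.edges.map T.len).sum := by
  apply List.sum_nonneg
  intro a ha
  simp only [List.mem_map] at ha
  obtain ⟨e, he, rfl⟩ := ha
  exact (T.len_pos e (W.edges_subset_edgeSet he)).le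

lemma d_self (x : V) : T.d x x = 0 := by
  rw [T.d_eq_plen Walk.nil Walk.IsPath.nil]; simp

lemma d_nonneg (x y : V) : 0 ≤ T.d x y := by
  rw [d_def]; exact T.plen_nonneg _

lemma d_symm (x y : V) : T.d x y = T.d y x := by
  rw [T.d_eq_plen (T.upath y x).reverse (T.upath_isPath y x).reverse, d_def]
  simp [Walk.edges_reverse, List.map_reverse, List.sum_reverse]

lemma d_pos {x y : V} (h : x ≠ y) : 0 < T.d x y := by
  have hd := T.d_def x y
  set W := T.upath x y with hW
  clear_value W
  cases W with
  | nil => exact absurd rfl h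
  | @cons _ z _ hadj W' =>
    rw [hd]
    simp only [Walk.edges_cons, List.map_cons, List.sum_cons]
    have h1 : 0 < T.len s(x, z) := T.len_pos _ ((Walk.cons hadj W').edges_subset_edgeSet (by simp))
    have h2 := T.plen_nonneg W'
    linarith

lemma d_add {x y z : V} (W : T.G.Walk x z) (hW : W.IsPath) (hy : y ∈ W.support) :
    T.d x y + T.d y z = T.d x z := by
  have h1 : (List.map T.len W.edges).sum =
      (List.map T.len ((W.takeUntil y hy).append (W.dropUntil y hy)).edges).sum := by
    rw [Walk.take_spec]
  rw [T.d_eq_plen _ (hW.takeUntil hy), T.d_eq_plen _ (hW.dropUntil hy), T.d_eq_plen W hW, h1,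
    Walk.edges_append, List.map_append, List.sum_append]

lemma isPath_append {x y z : V} {p : T.G.Walk x y} {q : T.G.Walk y z}
    (hp : p.IsPath) (hq : q.IsPath) (hmeet : ∀ a ∈ p.support, a ∈ q.support → a = y) :
    (p.append q).IsPath := by
  rw [Walk.isPath_def, Walk.support_append]
  apply List.Nodup.append hp.support_nodup (hq.support_nodup.tail)
  intro a ha hta
  have hmem : a ∈ q.support := List.tail_subset _ hta
  have hay : a = y := hmeet a ha hmem
  subst hay
  have := hq.support_nodup
  rw [q.support_eq_cons] at this
  exact (List.nodup_cons.1 this).1 hta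

lemma isPath_concat {x y z : V} {p : T.G.Walk x y} (hp : p.IsPath) (h : T.G.Adj y z)
    (hz : z ∉ p.support) : (p.concat h).IsPath := by
  rw [Walk.concat_eq_append]
  refine T.isPath_append hp ?_ ?_
  · rw [Walk.cons_isPath_iff]
    refine ⟨Walk.IsPath.nil, ?_⟩
    simp [h.ne]
  · intro a ha hmem
    simp only [Walk.support_cons, Walk.support_nil, List.mem_cons, List.mem_singleton,
      List.not_mem_nil, or_false] at hmem
    rcases hmem with rfl | rfl
    · rfl
    · exact absurd ha hz

lemma takeUntil_cons {x y z : V} (h : T.G.Adj x y) (W : T.G.Walk y z) {c : V}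
    (hc : c ∈ (Walk.cons h W).support) (hcx : c ≠ x) (hc' : c ∈ W.support) :
    (Walk.cons h W).takeUntil c hc = Walk.cons h (W.takeUntil c hc') := by
  rw [Walk.takeUntil]
  simp [hcx.symm]

lemma upath_support_subset {a c : V} (W : T.G.Walk a c) (hW : W.IsPath) {p q : V}
    (hp : p ∈ W.support) (hq : q ∈ W.support) :
    (T.upath p q).support ⊆ W.support := by
  by_cases hq2 : q ∈ (W.dropUntil p hp).support
  · rw [← T.upath_unique ((hW.dropUntil hp).takeUntil hq2)]
    exact fun x hx => Walk.support_dropUntil_subset_support _ _ (Walk.support_takeUntil_subset_support _ _ hx)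
  · have hq1 : q ∈ (W.takeUntil p hp).support := by
      have h2 := hq
      rw [← Walk.take_spec W hp, Walk.mem_support_append_iff] at h2
      tauto
    have hq1' : q ∈ (W.takeUntil p hp).reverse.support := by
      rwa [Walk.support_reverse, List.mem_reverse]
    rw [← T.upath_unique (((hW.takeUntil hp).reverse).takeUntil hq1')]
    refine List.Subset.trans (Walk.support_takeUntil_subset_support _ _) ?_
    intro x hx
    rw [Walk.support_reverse, List.mem_reverse] at hx
    exact Walk.support_takeUntil_subset _ _ hx

lemma d_step {a c : V} (W : T.G.Walk a c) (hW : W.IsPath) {v v₁ x : V}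
    (h : T.G.Adj v v₁) (U' : T.G.Walk v₁ x) (hU : (Walk.cons h U').IsPath)
    (hx : x ∈ W.support) (hv : v ∉ W.support) {q : V} (hq : q ∈ W.support) :
    T.d v q = T.len s(v, v₁) + T.d v₁ q := by
  have hvq : v ≠ q := fun e => hv (e ▸ hq)
  have hd := T.d_def v q
  have hYpath := T.upath_isPath v q
  set Y := T.upath v q with hYdef
  clear_value Y
  cases Y with
  | nil => exact absurd rfl hvq
  | @cons _ y₁ _ h' Y' =>
    have hy : y₁ = v₁ := by
      by_contra hne
      have hdisj : ∀ b ∈ (Walk.cons h U').support, b ∈ (Walk.cons h' Y').support → b = v := by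
        intro b hb1 hb2
        by_contra hbv
        have hb1' : b ∈ U'.support := by
          simpa [hbv] using hb1
        have hb2' : b ∈ Y'.support := by
          simpa [hbv] using hb2
        have e1 := T.upath_unique (hU.takeUntil hb1)
        have e2 := T.upath_unique (hYpath.takeUntil hb2)
        rw [T.takeUntil_cons h U' hb1 hbv hb1'] at e1
        rw [T.takeUntil_cons h' Y' hb2 hbv hb2'] at e2
        have e3 := e1.trans e2.symm
        have : v₁ = y₁ := by
          have g1 := (Walk.getVert_cons_succ (n := 0) (U'.takeUntil b hb1') h).trans (Walk.getVert_zero _)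
          have g2 := (Walk.getVert_cons_succ (n := 0) (Y'.takeUntil b hb2') h').trans (Walk.getVert_zero _)
          rw [← g1, ← g2, e3]
        exact hne this.symm
      have hZ : ((Walk.cons h U').reverse.append (Walk.cons h' Y')).IsPath := by
        refine T.isPath_append hU.reverse hYpath ?_
        intro b hb1 hb2
        refine hdisj b ?_ hb2
        rwa [Walk.support_reverse, List.mem_reverse] at hb1
      have hvmem : v ∈ (T.upath x q).support := by
        rw [← T.upath_unique hZ, Walk.mem_support_append_iff]
        left
        rw [Walk.support_reverse, List.mem_reverse]
        exact Walk.start_mem_support _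
      exact hv (T.upath_support_subset W hW hx hq hvmem)
    subst hy
    have hY' : Y'.IsPath := ((Walk.cons_isPath_iff h' Y').1 hYpath).1
    rw [hd]
    simp only [Walk.edges_cons, List.map_cons, List.sum_cons]
    rw [← T.d_eq_plen Y' hY']

lemma exists_isProj {a c : V} (W : T.G.Walk a c) (hW : W.IsPath) (v : V) :
    ∃ p ∈ W.support, ∀ q ∈ W.support, T.d q v = T.d q p + T.d p v := by
  have main : ∀ {v x : V} (U : T.G.Walk v x), U.IsPath → x ∈ W.support →
      ∃ p ∈ W.support, ∀ q ∈ W.support, T.d q v = T.d q p + T.d p v := by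
    intro v x U
    induction U with
    | nil =>
      intro _ hx
      exact ⟨_, hx, fun q hq => by rw [T.d_self, add_zero]⟩
    | @cons v v₁ x h U' ih =>
      intro hU hx
      by_cases hv : v ∈ W.support
      · exact ⟨v, hv, fun q hq => by rw [T.d_self, add_zero]⟩
      · obtain ⟨p, hp, hchar⟩ := ih ((Walk.cons_isPath_iff h U').1 hU).1 hx
        refine ⟨p, hp, fun q hq => ?_⟩
        have h1 := T.d_step W hW h U' hU hx hv hq
        have h2 := T.d_step W hW h U' hU hx hv hp
        have hc := hchar q hq
        have s1 := T.d_symm q v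
        have s2 := T.d_symm p v
        have s3 := T.d_symm v₁ q
        have s4 := T.d_symm v₁ p
        linarith
  exact main (T.upath v a) (T.upath_isPath v a) (Walk.start_mem_support W)

/-- `p` is the projection of `v` onto the vertex list `l`. -/
def IsProj (l : List V) (v p : V) : Prop :=
  p ∈ l ∧ ∀ q ∈ l, T.d q v = T.d q p + T.d p v

lemma IsProj.unique {l : List V} {v p p' : V} (h1 : T.IsProj l v p) (h2 : T.IsProj l v p') :
    p = p' := by
  have e1 := h1.2 p' h2.1
  have e2 := h2.2 p h1.1
  by_contra hne
  have hpos := T.d_pos hne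
  have hnn := T.d_nonneg p' p
  have hs := T.d_symm p p'
  linarith

lemma closest_eq {l : List V} {v p : V} (hl : T.IsProj l v p) : T.closest l v = p := by
  have hex : ∃ u ∈ l, ∀ u' ∈ l, T.d u v ≤ T.d u' v := by
    refine ⟨p, hl.1, fun u' hu' => ?_⟩
    rw [hl.2 u' hu']
    have := T.d_nonneg u' p
    linarith
  rw [WeightedTree.closest, dif_pos hex]
  obtain ⟨hc1, hc2⟩ := hex.choose_spec
  have e := hl.2 _ hc1
  have le := hc2 p hl.1
  by_contra hne
  have hpos := T.d_pos hne
  linarith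

lemma isProj_closest {a c : V} (W : T.G.Walk a c) (hW : W.IsPath) (v : V) :
    T.IsProj W.support v (T.closest W.support v) := by
  obtain ⟨p, hp, hc⟩ := T.exists_isProj W hW v
  rw [T.closest_eq ⟨hp, hc⟩]
  exact ⟨hp, hc⟩

end WeightedTree

set_option maxHeartbeats 1000000 in
/-- the exact change of the objective `F` when a path `P` is extended
by an adjacent vertex `u`, assuming the extended path is stable. -/
theorem F_concat_eq {V : Type*} [Fintype V] [DecidableEq V] (T : WeightedTree V)
    {a b u : V} (P : T.G.Walk a b) (hP : P.IsPath)
    (hadj : T.G.Adj b u) (hu : u ∉ P.support)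
    (lam α1 α2 β : ℝ) (hlam : 0 < lam) (hα1 : 0 ≤ α1) (hα2 : 0 ≤ α2)
    (hβ0 : 0 ≤ β) (hβ1 : β ≤ 1)
    (hstable : 0 < 1 - lam * T.Sbar (P.concat hadj).support) :
    T.F α1 α2 β lam (P.concat hadj) =
      T.F α1 α2 β lam P +
        (((α1 + (2 * α2 * β / T.vt) * T.wBranch (P.concat hadj).support u *
              (T.wT - T.wBranch (P.concat hadj).support u)
            - (1 - β) * (α2 / T.vt) * T.wBranch (P.concat hadj).support u)
          * T.dP P.support u : ℝ) : EReal) +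
        ((α2 * β : ℝ) : EReal) *
          (T.QbarE lam (P.concat hadj).support - T.QbarE lam P.support) := by
  classical
  open SimpleGraph Walk WeightedTree in
  set l := P.support with hldef
  set l' := (P.concat hadj).support with hl'def
  have hP' : (P.concat hadj).IsPath := T.isPath_concat hP hadj hu
  have hl' : l' = l ++ [u] := by
    rw [hl'def, Walk.support_concat, hldef]
  have hbu : T.d b u = T.len s(b, u) := by
    have hpath : (Walk.cons hadj Walk.nil).IsPath := by
      rw [Walk.cons_isPath_iff]
      exact ⟨Walk.IsPath.nil, by simp [hadj.ne]⟩
    rw [T.d_eq_plen _ hpath]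
    simp
  have hbu_pos : 0 < T.d b u := by
    rw [hbu]
    exact T.len_pos _ (by rwa [SimpleGraph.mem_edgeSet])
  have hul : u ∉ l := hu
  have hbl : b ∈ l := Walk.end_mem_support P
  have hbu_ne : b ≠ u := hadj.ne
  have hqu : ∀ q ∈ l, T.d q u = T.d q b + T.d b u := by
    intro q hq
    have hdrop : (P.dropUntil q hq).IsPath := hP.dropUntil hq
    have hu2 : u ∉ (P.dropUntil q hq).support :=
      fun hc => hu (Walk.support_dropUntil_subset _ _ hc)
    have h1 : ((P.dropUntil q hq).concat hadj).IsPath := T.isPath_concat hdrop hadj hu2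
    rw [T.d_eq_plen _ h1, Walk.edges_concat, List.concat_eq_append, List.map_append,
      List.sum_append, ← T.d_eq_plen _ hdrop, hbu]
    simp
  have hproj_u : T.IsProj l u b := ⟨hbl, hqu⟩
  have hdPu : T.dP l u = T.d b u := by
    rw [WeightedTree.dP, T.closest_eq hproj_u]
  have hproj' : ∀ v, T.IsProj l' v (T.closest l' v) := fun v => by
    rw [hl'def]
    exact T.isProj_closest _ hP' v
  have hmeml : ∀ v, T.closest l' v ≠ u → T.closest l' v ∈ l := by
    intro v hcu
    have h1 := (hproj' v).1
    nth_rewrite 1 [hl'] at h1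
    rcases List.mem_append.1 h1 with h | h
    · exact h
    · simp only [List.mem_singleton] at h
      exact absurd h hcu
  have hkey : ∀ v : V, T.closest l v = (if T.closest l' v = u then b else T.closest l' v) ∧
      T.dP l v = T.dP l' v + (if T.closest l' v = u then T.d b u else 0) := by
    intro v
    have hc' := hproj' v
    by_cases hcu : T.closest l' v = u
    · rw [if_pos hcu, if_pos hcu]
      have hbv : T.d b v = T.d b u + T.d u v := by
        have h2 := hc'.2 b (by rw [hl']; exact List.mem_append_left _ hbl)
        rwa [hcu] at h2
      have hPb : T.IsProj l v b := by
        refine ⟨hbl, fun q hq => ?_⟩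
        have h2 := hc'.2 q (by rw [hl']; exact List.mem_append_left _ hq)
        rw [hcu] at h2
        rw [h2, hqu q hq, hbv]
        ring
      refine ⟨T.closest_eq hPb, ?_⟩
      rw [WeightedTree.dP, WeightedTree.dP, T.closest_eq hPb, hcu, hbv]
      ring
    · rw [if_neg hcu, if_neg hcu, add_zero]
      have hPc : T.IsProj l v (T.closest l' v) :=
        ⟨hmeml v hcu, fun q hq => hc'.2 q (by rw [hl']; exact List.mem_append_left _ hq)⟩
      exact ⟨T.closest_eq hPc, by rw [WeightedTree.dP, WeightedTree.dP, T.closest_eq hPc]⟩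
  have hnodup : l.Nodup := hP.support_nodup
  have hnodup' : l'.Nodup := by rw [hl'def]; exact hP'.support_nodup
  have hwB : ∀ q ∈ l, T.wBranch l q = T.wBranch l' q + (if q = b then T.wBranch l' u else 0) := by
    intro q hq
    have hqnu : q ≠ u := fun e => hul (e ▸ hq)
    by_cases hqb : q = b
    · subst hqb
      rw [if_pos rfl, WeightedTree.wBranch, WeightedTree.wBranch, WeightedTree.wBranch]
      have hsplit : (Finset.univ.filter fun v => T.closest l v = q) =
          (Finset.univ.filter fun v => T.closest l' v = q) ∪
            (Finset.univ.filter fun v => T.closest l' v = u) := by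
        ext v
        simp only [Finset.mem_union, Finset.mem_filter, Finset.mem_univ, true_and]
        rw [(hkey v).1]
        by_cases hcu : T.closest l' v = u
        · simp [hcu]
        · simp [hcu]
      rw [hsplit, Finset.sum_union]
      rw [Finset.disjoint_left]
      intro v hv1 hv2
      simp only [Finset.mem_filter, Finset.mem_univ, true_and] at hv1 hv2
      exact hqnu (hv1 ▸ hv2)
    · rw [if_neg hqb, add_zero, WeightedTree.wBranch, WeightedTree.wBranch]
      apply Finset.sum_congr _ (fun _ _ => rfl)
      ext v
      simp only [Finset.mem_filter, Finset.mem_univ, true_and]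
      rw [(hkey v).1]
      by_cases hcu : T.closest l' v = u
      · simp [hcu, hqb, Ne.symm hqb, hqnu, Ne.symm hqnu]
      · simp [hcu]
  have hmaps : ∀ v, T.closest l' v ∈ l' := fun v => (hproj' v).1
  have hBsum' : ∑ q ∈ l'.toFinset, T.wBranch l' q = T.wT := by
    rw [WeightedTree.wT, ← Finset.sum_fiberwise_of_maps_to (g := fun v => T.closest l' v)
      (fun v _ => List.mem_toFinset.2 (hmaps v)) T.w]
    rfl
  have huF : u ∉ l.toFinset := fun hc => hul (List.mem_toFinset.1 hc)
  have hl'toF : l'.toFinset = insert u l.toFinset := by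
    rw [hl']
    ext x
    simp [or_comm]
  have hBsuml : ∑ q ∈ l.toFinset, T.wBranch l' q = T.wT - T.wBranch l' u := by
    have h2 := hBsum'
    rw [hl'toF, Finset.sum_insert huF] at h2
    linarith
  have hwB_nonneg : 0 ≤ T.wBranch l' u := Finset.sum_nonneg fun i _ => T.w_nonneg i
  have hwB_le : T.wBranch l' u ≤ T.wT := by
    have h0 : 0 ≤ ∑ q ∈ l.toFinset, T.wBranch l' q :=
      Finset.sum_nonneg fun q _ => Finset.sum_nonneg fun i _ => T.w_nonneg i
    linarith [hBsuml]
  have hdbar_toF : ∀ (m : List V), m.Nodup → ∀ p, T.dbar m p =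
      ∑ q ∈ m.toFinset, T.wBranch m q * T.d q p := by
    intro m hm p
    rw [WeightedTree.dbar, ← List.sum_toFinset _ hm]
  have hdbarl : ∀ p, T.dbar l p =
      ∑ q ∈ l.toFinset, T.wBranch l' q * T.d q p + T.wBranch l' u * T.d b p := by
    intro p
    rw [hdbar_toF l hnodup]
    calc ∑ q ∈ l.toFinset, T.wBranch l q * T.d q p
        = ∑ q ∈ l.toFinset, (T.wBranch l' q * T.d q p +
            (if q = b then T.wBranch l' u * T.d q p else 0)) :=
          Finset.sum_congr rfl (fun q hq => by
            rw [hwB q (List.mem_toFinset.1 hq), add_mul, ite_mul, zero_mul])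
      _ = _ := by
          rw [Finset.sum_add_distrib,
            Finset.sum_ite_eq' l.toFinset b (fun q => T.wBranch l' u * T.d q p),
            if_pos (List.mem_toFinset.2 hbl)]
  have hdbar' : ∀ p ∈ l, T.dbar l' p = T.dbar l p + T.wBranch l' u * T.d b u := by
    intro p hp
    rw [hdbar_toF l' hnodup', hl'toF, Finset.sum_insert huF, hdbarl]
    have hup : T.d u p = T.d b p + T.d b u := by
      rw [T.d_symm u p, hqu p hp, T.d_symm p b]
    rw [hup]
    ring
  have hdbar_u : T.dbar l' u = T.dbar l b + (T.wT - T.wBranch l' u) * T.d b u := by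
    rw [hdbar_toF l' hnodup', hl'toF, Finset.sum_insert huF, T.d_self, mul_zero, zero_add]
    have h2 : ∑ q ∈ l.toFinset, T.wBranch l' q * T.d q u
        = ∑ q ∈ l.toFinset, (T.wBranch l' q * T.d q b + T.wBranch l' q * T.d b u) :=
      Finset.sum_congr rfl fun q hq => by rw [hqu q (List.mem_toFinset.1 hq)]; ring
    rw [h2, Finset.sum_add_distrib, ← Finset.sum_mul, hBsuml, hdbarl b, T.d_self,
      mul_zero, add_zero]
  have hdbarcl : ∀ v, T.dbar l' (T.closest l' v) = T.dbar l (T.closest l v) +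
      (if T.closest l' v = u then T.wT - T.wBranch l' u else T.wBranch l' u) * T.d b u := by
    intro v
    by_cases hcu : T.closest l' v = u
    · rw [if_pos hcu, hcu, hdbar_u, (hkey v).1, if_pos hcu]
    · rw [if_neg hcu, (hkey v).1, if_neg hcu]
      exact hdbar' _ (hmeml v hcu)
  have hT1 : T.T1 l = T.T1 l' + (1 / T.vt) * (T.wBranch l' u * T.d b u) := by
    rw [WeightedTree.T1, WeightedTree.T1]
    have h2 : ∀ v : V, T.w v * T.dP l v = T.w v * T.dP l' v +
        (if T.closest l' v = u then T.w v * T.d b u else 0) := by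
      intro v
      rw [(hkey v).2, mul_add, mul_ite, mul_zero]
    rw [Finset.sum_congr rfl (fun v _ => h2 v), Finset.sum_add_distrib,
      ← Finset.sum_filter, ← Finset.sum_mul]
    have hA : ∑ v ∈ Finset.univ.filter (fun v => T.closest l' v = u), T.w v
        = T.wBranch l' u := rfl
    rw [hA]
    ring
  have hT2 : T.T2 l' = T.T2 l +
      (1 / T.vt) * (2 * T.wBranch l' u * (T.wT - T.wBranch l' u) * T.d b u) := by
    rw [WeightedTree.T2, WeightedTree.T2]
    have hsummand : ∀ v : V, T.w v * T.dbar l' (T.closest l' v)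
        = T.w v * T.dbar l (T.closest l v) +
          (if T.closest l' v = u then T.w v * ((T.wT - T.wBranch l' u) * T.d b u)
            else T.w v * (T.wBranch l' u * T.d b u)) := by
      intro v
      rw [hdbarcl v, mul_add, ite_mul, mul_ite]
    rw [Finset.sum_congr rfl (fun v _ => hsummand v), Finset.sum_add_distrib, Finset.sum_ite,
      ← Finset.sum_mul, ← Finset.sum_mul]
    have hA : ∑ v ∈ Finset.univ.filter (fun v => T.closest l' v = u), T.w v
        = T.wBranch l' u := rfl
    have hAc : ∑ v ∈ Finset.univ.filter (fun v => ¬T.closest l' v = u), T.w v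
        = T.wT - T.wBranch l' u := by
      have h3 := Finset.sum_filter_add_sum_filter_not Finset.univ
        (fun v => T.closest l' v = u) T.w
      rw [hA] at h3
      rw [WeightedTree.wT]
      linarith [h3]
    rw [hA, hAc]
    ring
  have hSbar : ∀ m, T.Sbar m = T.T2 m := by
    intro m
    rw [WeightedTree.Sbar, WeightedTree.T2, Finset.mul_sum]
    exact Finset.sum_congr rfl fun v _ => by rw [WeightedTree.s, WeightedTree.sOn]; ring
  have hvt := T.vt_pos
  have hdelta2 : 0 ≤ 2 * T.wBranch l' u * (T.wT - T.wBranch l' u) * T.d b u := by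
    apply mul_nonneg (mul_nonneg (by linarith) (by linarith)) hbu_pos.le
  have hS_le : T.Sbar l ≤ T.Sbar l' := by
    rw [hSbar, hSbar, hT2]
    have h4 : 0 ≤ (1 / T.vt) * (2 * T.wBranch l' u * (T.wT - T.wBranch l' u) * T.d b u) :=
      mul_nonneg (by positivity) hdelta2
    linarith
  have hstable2 : 0 < 1 - lam * T.Sbar l := by
    have h5 : lam * T.Sbar l ≤ lam * T.Sbar l' := mul_le_mul_of_nonneg_left hS_le hlam.le
    linarith
  have hQ' : T.QbarE lam l' = ((lam * T.S2bar l' / (2 * (1 - lam * T.Sbar l')) : ℝ) : EReal) := by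
    rw [WeightedTree.QbarE, if_pos hstable]
  have hQ : T.QbarE lam l = ((lam * T.S2bar l / (2 * (1 - lam * T.Sbar l)) : ℝ) : EReal) := by
    rw [WeightedTree.QbarE, if_pos hstable2]
  have hplen : T.plen (P.concat hadj) = T.plen P + T.d b u := by
    rw [WeightedTree.plen, WeightedTree.plen, Walk.edges_concat, List.concat_eq_append,
      List.map_append, List.sum_append, hbu]
    simp
  simp only [WeightedTree.F]
  rw [hQ', hQ, hdPu, hplen]
  norm_cast
  rw [hT2, hT1]
  ring
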